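/- Let n ≥ 2 and let M_n ∈ ℝ^{n×n} be the tridiagonal matrix with (M_n)_{k,k+1} = 1/2 for 1 ≤ k ≤ n−1, (M_n)_{k+1,k} = −1/2 for 1 ≤ k ≤ n−2, (M_n)_{n,n−1} = −1, (M_n)_{n,n} = 1, and all other entries (including all other diagonal entries) equal to 0. Then every eigenvalue μ ∈ ℂ of M_n satisfies |μ| < 1 + 1/√(2n). -/

import Mathlib

/-- The tridiagonal time-discretization matrix `M_n = τB` (0-based indexing):
superdiagonal entries `1/2`, subdiagonal entries `-1/2` except the last one which is `-1`,
and all diagonal entries `0` except the last one which is `1`. -/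
noncomputable def Mmat (n : ℕ) : Matrix (Fin n) (Fin n) ℝ := fun i j =>
  if (j : ℕ) = (i : ℕ) + 1 then 1/2
  else if (i : ℕ) = (j : ℕ) + 1 then (if (i : ℕ) = n - 1 then -1 else -1/2)
  else if (i : ℕ) = n - 1 ∧ (j : ℕ) = n - 1 then 1
  else 0

lemma aux_final (n : ℕ) (hn : 2 ≤ n) (μ w : ℂ) (hw : w ^ 2 = μ ^ 2 + 1)
    (hge : 1 + 1 / Real.sqrt (2 * n) ≤ ‖μ‖)
    (hord : ‖-μ + w‖ ≤ ‖-μ - w‖)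
    (hE : (1 - w) * (-μ - w) ^ n = (1 + w) * (-μ + w) ^ n) : False := by
  have hn0 : (0:ℝ) < n := by positivity
  have h2n : (2:ℝ) ≤ n := by exact_mod_cast hn
  have hεpos : 0 < 1 / Real.sqrt (2 * n) := by
    have : (0:ℝ) < Real.sqrt (2 * n) := Real.sqrt_pos.mpr (by positivity)
    positivity
  have hμ1 : 1 < ‖μ‖ := by linarith
  set Z := ‖-μ - w‖ with hZdef
  set Z' := ‖-μ + w‖ with hZ'def
  have hzz' : (-μ - w) * (-μ + w) = -1 := by linear_combination -hw
  have hZZ' : Z * Z' = 1 := by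
    rw [hZdef, hZ'def, ← norm_mul, hzz']
    simp
  have hZ'0 : 0 ≤ Z' := norm_nonneg _
  have hZ0 : 0 ≤ Z := norm_nonneg _
  have hZ1 : 1 ≤ Z := by nlinarith
  have hZpos : 0 < Z := by linarith
  have hsum : 2 * ‖μ‖ ≤ Z + Z' := by
    have h1 : ‖(-μ - w) + (-μ + w)‖ ≤ Z + Z' := norm_add_le _ _
    have h2 : ((-μ - w) + (-μ + w)) = (-2) * μ := by ring
    rw [h2, norm_mul] at h1
    have h3 : ‖(-2:ℂ)‖ = 2 := by
      rw [norm_neg]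
      have : ((2 : ℂ)) = ((2 : ℝ) : ℂ) := by norm_num
      rw [this, Complex.norm_real]; norm_num
    rw [h3] at h1
    exact h1
  -- x = (2/n)^(1/4)
  set x := Real.sqrt (Real.sqrt (2 / n)) with hxdef
  have hx0 : 0 ≤ x := Real.sqrt_nonneg _
  have hx2 : x ^ 2 = Real.sqrt (2 / n) := Real.sq_sqrt (Real.sqrt_nonneg _)
  have hx4 : x ^ 4 = 2 / n := by
    have : x ^ 4 = (x ^ 2) ^ 2 := by ring
    rw [this, hx2, Real.sq_sqrt (by positivity)]
  have h2eps : 2 * (1 / Real.sqrt (2 * n)) = x ^ 2 := by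
    rw [hx2]
    have h0 : (2:ℝ)/n = 4/(2*n) := by
      field_simp; ring
    rw [h0, Real.sqrt_div (by norm_num : (0:ℝ) ≤ 4),
      show Real.sqrt 4 = 2 by rw [show (4:ℝ) = 2 ^ 2 by norm_num, Real.sqrt_sq (by norm_num)]]
    ring
  have hZx : 1 + x ≤ Z := by
    have hsq : x ^ 2 ≤ (Z - 1) ^ 2 := by nlinarith
    have h1 : x ≤ Z - 1 := by
      have := Real.sqrt_le_sqrt hsq
      rwa [Real.sqrt_sq hx0, Real.sqrt_sq (by linarith)] at this
    linarith
  have hnx : 2 ≤ (n:ℝ) * x := by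
    have h4 : (2:ℝ) ^ 4 ≤ ((n:ℝ) * x) ^ 4 := by
      have he : ((n:ℝ) * x) ^ 4 = 2 * (n:ℝ) ^ 3 := by
        rw [mul_pow, hx4]; field_simp
      rw [he]
      have h3 : (2:ℝ) ^ 3 ≤ (n:ℝ) ^ 3 := pow_le_pow_left₀ (by norm_num) h2n 3
      norm_num at h3 ⊢
      linarith
    exact le_of_pow_le_pow_left₀ (by norm_num) (by positivity) h4
  have hZn : 3 ≤ Z ^ n := by
    have h1 : 1 + (n:ℝ) * x ≤ (1 + x) ^ n := one_add_mul_le_pow (by linarith) n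
    have h2 : (1 + x) ^ n ≤ Z ^ n := pow_le_pow_left₀ (by linarith) hZx n
    linarith
  -- abs of the key equation
  have habs : ‖1 - w‖ * Z ^ n = ‖1 + w‖ * Z' ^ n := by
    have := congrArg (‖·‖) hE
    rwa [norm_mul, norm_mul, norm_pow, norm_pow] at this
  set a := ‖1 - w‖ with hadef
  set b := ‖1 + w‖ with hbdef
  have hab : a * b = ‖μ‖ ^ 2 := by
    have h1 : (1 - w) * (1 + w) = -(μ ^ 2) := by linear_combination -hw
    have h2 : ‖(1 - w) * (1 + w)‖ = ‖μ‖ ^ 2 := by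
      rw [h1, norm_neg, norm_pow]
    rw [← h2, norm_mul]
  have hZn0 : (0:ℝ) < Z ^ n := pow_pos hZpos n
  have hZ'eq : Z' = 1 / Z := by
    rw [eq_div_iff (ne_of_gt hZpos)]
    linarith [hZZ', mul_comm Z Z']
  have hkey : a * Z ^ n * Z ^ n = b := by
    rw [hZ'eq, div_pow, one_pow] at habs
    have h1 : (1/(Z^n)) * Z ^ n = 1 := by
      field_simp
    calc a * Z ^ n * Z ^ n = (b * (1 / Z ^ n)) * Z ^ n := by rw [habs]
      _ = b * ((1/(Z^n)) * Z ^ n) := by ring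
      _ = b := by rw [h1, mul_one]
  have ha0 : 0 ≤ a := norm_nonneg _
  have hb0 : 0 ≤ b := norm_nonneg _
  have haZn : a * Z ^ n = ‖μ‖ := by
    have hsq : (a * Z ^ n) ^ 2 = ‖μ‖ ^ 2 := by
      calc (a * Z ^ n) ^ 2 = a * (a * Z ^ n * Z ^ n) := by ring
        _ = a * b := by rw [hkey]
        _ = ‖μ‖ ^ 2 := hab
    have h1 := congrArg Real.sqrt hsq
    rwa [Real.sqrt_sq (by positivity), Real.sqrt_sq (norm_nonneg μ)] at h1
  have hbval : b = ‖μ‖ * Z ^ n := by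
    calc b = a * Z ^ n * Z ^ n := hkey.symm
      _ = ‖μ‖ * Z ^ n := by rw [haZn]
  -- upper bound for b
  have hwabs : ‖w‖ ≤ 1 + ‖μ‖ := by
    have h1 : ‖w‖ ^ 2 = ‖μ ^ 2 + 1‖ := by rw [← norm_pow, hw]
    have h2 : ‖μ ^ 2 + 1‖ ≤ ‖μ‖ ^ 2 + 1 := by
      calc ‖μ ^ 2 + 1‖ ≤ ‖μ ^ 2‖ + ‖(1:ℂ)‖ :=
            norm_add_le _ _
        _ = ‖μ‖ ^ 2 + 1 := by rw [norm_pow, norm_one]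
    have h3 : ‖w‖ ^ 2 ≤ (1 + ‖μ‖) ^ 2 := by nlinarith
    have h4 := Real.sqrt_le_sqrt h3
    rwa [Real.sqrt_sq (norm_nonneg w),
      Real.sqrt_sq (by linarith [norm_nonneg μ])] at h4
  have hble : b ≤ 1 + ‖w‖ := by
    calc b ≤ ‖(1:ℂ)‖ + ‖w‖ := norm_add_le _ _
      _ = 1 + ‖w‖ := by rw [norm_one]
  have h3 : ‖μ‖ * 3 ≤ ‖μ‖ * Z ^ n :=
    mul_le_mul_of_nonneg_left hZn (by linarith)
  linarith

lemma Mmat_apply (n : ℕ) (i j : Fin n) :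
    Mmat n i j = (if (j : ℕ) = (i : ℕ) + 1 then 1/2
  else if (i : ℕ) = (j : ℕ) + 1 then (if (i : ℕ) = n - 1 then -1 else -1/2)
  else if (i : ℕ) = n - 1 ∧ (j : ℕ) = n - 1 then 1
  else 0 : ℝ) := rfl

theorem stmt_14 (n : ℕ) (hn : 2 ≤ n) :
    ∀ μ ∈ spectrum ℂ ((Mmat n).map Complex.ofReal),
      ‖μ‖ < 1 + 1 / Real.sqrt (2 * n) := by
  intro μ hμ
  by_contra hge
  push_neg at hge
  classical
  set A := (Mmat n).map Complex.ofReal with hAdef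
  -- eigenvector
  rw [spectrum.mem_iff] at hμ
  have hdet : ((algebraMap ℂ (Matrix (Fin n) (Fin n) ℂ)) μ - A).det = 0 := by
    by_contra h
    exact hμ ((Matrix.isUnit_iff_isUnit_det _).mpr (Ne.isUnit h))
  obtain ⟨v, hv0, hv⟩ := (Matrix.exists_mulVec_eq_zero_iff).mpr hdet
  have hAv : ∀ i : Fin n, ∑ j, A i j * v j = μ * v i := by
    intro i
    have h1 : ((algebraMap ℂ (Matrix (Fin n) (Fin n) ℂ)) μ - A).mulVec v i = 0 := by
      rw [hv]; rfl
    rw [Matrix.sub_mulVec] at h1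
    have h2 : ((algebraMap ℂ (Matrix (Fin n) (Fin n) ℂ)) μ).mulVec v = μ • v := by
      rw [Algebra.algebraMap_eq_smul_one, Matrix.smul_mulVec, Matrix.one_mulVec]
    rw [h2] at h1
    simp only [Pi.sub_apply, Pi.smul_apply, smul_eq_mul, Pi.zero_apply, sub_eq_zero,
      Matrix.mulVec, dotProduct] at h1
    exact h1.symm
  -- sum reduction
  have hred : ∀ (i : Fin n) (S : Finset (Fin n)),
      (∀ j, j ∉ S → A i j * v j = 0) →
      ∑ j ∈ S, A i j * v j = μ * v i := by
    intro i S h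
    rw [← hAv i]
    exact Finset.sum_subset (Finset.subset_univ S) (fun x _ hx => h x hx)
  -- entry lemmas
  have hzeroE : ∀ (i j : Fin n), (j:ℕ) ≠ (i:ℕ)+1 → (i:ℕ) ≠ (j:ℕ)+1 →
      ¬((i:ℕ) = n-1 ∧ (j:ℕ) = n-1) → A i j = 0 := by
    intro i j h1 h2 h3
    simp only [hAdef, Matrix.map_apply, Mmat_apply, if_neg h1, if_neg h2, if_neg h3,
      Complex.ofReal_zero]
  have hsupE : ∀ (i j : Fin n), (j:ℕ) = (i:ℕ)+1 → A i j = 1/2 := by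
    intro i j h1
    simp only [hAdef, Matrix.map_apply, Mmat_apply, if_pos h1]
    norm_num
  have hsubE : ∀ (i j : Fin n), (j:ℕ) ≠ (i:ℕ)+1 → (i:ℕ) = (j:ℕ)+1 → (i:ℕ) ≠ n-1 →
      A i j = -(1/2) := by
    intro i j h1 h2 h3
    simp only [hAdef, Matrix.map_apply, Mmat_apply, if_neg h1, if_pos h2, if_neg h3]
    norm_num
  have hsublE : ∀ (i j : Fin n), (j:ℕ) ≠ (i:ℕ)+1 → (i:ℕ) = (j:ℕ)+1 → (i:ℕ) = n-1 →
      A i j = -1 := by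
    intro i j h1 h2 h3
    simp only [hAdef, Matrix.map_apply, Mmat_apply, if_neg h1, if_pos h2, if_pos h3]
    norm_num
  have hdiagE : ∀ (i j : Fin n), (j:ℕ) ≠ (i:ℕ)+1 → (i:ℕ) ≠ (j:ℕ)+1 →
      (i:ℕ) = n-1 → (j:ℕ) = n-1 → A i j = 1 := by
    intro i j h1 h2 h3 h4
    simp only [hAdef, Matrix.map_apply, Mmat_apply, if_neg h1, if_neg h2, if_pos (show (i:ℕ) = n-1 ∧ (j:ℕ) = n-1 from ⟨h3, h4⟩)]
    norm_num
  -- row n-1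
  have hrowlast : v ⟨n-2, by omega⟩ = (1 - μ) * v ⟨n-1, by omega⟩ := by
    have key := hred ⟨n-1, by omega⟩ {⟨n-2, by omega⟩, ⟨n-1, by omega⟩} ?_
    · rw [Finset.sum_insert (by
        simp only [Finset.mem_singleton, Fin.mk.injEq]; omega),
        Finset.sum_singleton] at key
      rw [hsublE ⟨n-1, by omega⟩ ⟨n-2, by omega⟩ (by first | (simp; omega) | simp | omega) (by first | (simp; omega) | simp | omega)
        (by simp)] at key
      rw [hdiagE ⟨n-1, by omega⟩ ⟨n-1, by omega⟩ (by first | (simp; omega) | simp | omega) (by first | (simp; omega) | simp | omega)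
        (by simp) (by simp)] at key
      linear_combination -key
    · intro j hj
      simp only [Finset.mem_insert, Finset.mem_singleton, not_or] at hj
      have hj1 : (j:ℕ) ≠ n-2 := by
        intro h; exact hj.1 (Fin.ext (by simpa using h))
      have hj2 : (j:ℕ) ≠ n-1 := by
        intro h; exact hj.2 (Fin.ext (by simpa using h))
      rw [hzeroE ⟨n-1, by omega⟩ j (by first | (simp; omega) | simp | omega) (by first | (simp; omega) | simp | omega) (by first | (simp; omega) | simp | omega),
        zero_mul]
  -- row 0
  have hrow0 : (1/2 : ℂ) * v ⟨1, by omega⟩ = μ * v ⟨0, by omega⟩ := by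
    have key := hred ⟨0, by omega⟩ {⟨1, by omega⟩} ?_
    · rw [Finset.sum_singleton] at key
      rw [hsupE ⟨0, by omega⟩ ⟨1, by omega⟩ (by simp)] at key
      exact key
    · intro j hj
      simp only [Finset.mem_singleton] at hj
      have hj1 : (j:ℕ) ≠ 1 := by
        intro h; exact hj (Fin.ext (by simpa using h))
      rw [hzeroE ⟨0, by omega⟩ j (by first | (simp; omega) | simp | omega) (by first | (simp; omega) | simp | omega) (by first | (simp; omega) | simp | omega),
        zero_mul]
  -- interior rows
  have hint : ∀ (i : ℕ) (h1 : 1 ≤ i) (h2 : i ≤ n-2),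
      v ⟨i-1, by omega⟩ = v ⟨i+1, by omega⟩ - 2*μ*v ⟨i, by omega⟩ := by
    intro i h1 h2
    have key := hred ⟨i, by omega⟩ {⟨i-1, by omega⟩, ⟨i+1, by omega⟩} ?_
    · rw [Finset.sum_insert (by
        simp only [Finset.mem_singleton, Fin.mk.injEq]; omega),
        Finset.sum_singleton] at key
      rw [hsubE ⟨i, by omega⟩ ⟨i-1, by omega⟩ (by first | (simp; omega) | simp | omega) (by first | (simp; omega) | simp | omega)
        (by first | (simp; omega) | simp | omega)] at key
      rw [hsupE ⟨i, by omega⟩ ⟨i+1, by omega⟩ (by simp)] at key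
      linear_combination -2*key
    · intro j hj
      simp only [Finset.mem_insert, Finset.mem_singleton, not_or] at hj
      have hj1 : (j:ℕ) ≠ i-1 := by
        intro h; exact hj.1 (Fin.ext (by simpa using h))
      have hj2 : (j:ℕ) ≠ i+1 := by
        intro h; exact hj.2 (Fin.ext (by simpa using h))
      rw [hzeroE ⟨i, by omega⟩ j (by first | (simp; omega) | simp | omega) (by first | (simp; omega) | simp | omega) (by first | (simp; omega) | simp | omega),
        zero_mul]
  -- the reversed sequence
  set u : ℕ → ℂ := fun k => if h : k < n then v ⟨n-1-k, by omega⟩ else 0 with hudef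
  have hu : ∀ (k m : ℕ) (h : m < n), k < n → m = n-1-k → u k = v ⟨m, h⟩ := by
    intro k m h hk hm
    simp only [hudef]
    rw [dif_pos hk]
    exact congrArg v (Fin.ext (by first | (simp; omega) | simp | omega))
  have hu1 : u 1 = (1 - μ) * u 0 := by
    rw [hu 1 (n-2) (by omega) (by omega) (by omega),
      hu 0 (n-1) (by omega) (by omega) (by omega)]
    exact hrowlast
  have hu0eq : u (n-2) = 2*μ*u (n-1) := by
    rw [hu (n-2) 1 (by omega) (by omega) (by omega),
      hu (n-1) 0 (by omega) (by omega) (by omega)]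
    linear_combination 2*hrow0
  have hurec : ∀ k, k+2 ≤ n-1 → u (k+2) = u k - 2*μ*u (k+1) := by
    intro k hk
    have h := hint (n-2-k) (by omega) (by omega)
    rw [hu (k+2) (n-2-k-1) (by omega) (by omega) (by omega),
      hu (k+1) (n-2-k) (by omega) (by omega) (by omega),
      hu k (n-2-k+1) (by omega) (by omega) (by omega)]
    exact h
  -- square root w
  obtain ⟨w, hw⟩ := IsAlgClosed.exists_pow_nat_eq (μ^2+1) (n := 2) (by norm_num)
  have hsq2 : (0:ℝ) < Real.sqrt (2*n) := Real.sqrt_pos.mpr (by positivity)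
  have hμ1 : 1 < ‖μ‖ := by
    have : (0:ℝ) < 1/Real.sqrt (2*n) := by positivity
    linarith
  have hw0 : w ≠ 0 := by
    intro h
    rw [h] at hw
    have h1 : μ^2 = -1 := by linear_combination -hw
    have h2 : ‖μ‖ ^ 2 = 1 := by
      rw [← norm_pow, h1]
      simp
    nlinarith
  -- closed form
  have hcf : ∀ k, k ≤ n-1 → 2*w*u k =
      u 0 * (-((1-w) * (-μ-w)^k) + (1+w) * (-μ+w)^k) := by
    intro k
    induction k using Nat.strong_induction_on with
    | _ k ih =>
      match k with
      | 0 => intro _; simp only [pow_zero]; ring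
      | 1 => intro _; rw [hu1, pow_one, pow_one]; ring
      | (k+2) =>
        intro hk
        rw [hurec k hk]
        have i1 := ih (k+1) (by omega) (by omega)
        have i0 := ih k (by omega) (by omega)
        linear_combination i0 - 2*μ*i1 +
          (u 0 * ((1-w)*(-μ-w)^k - (1+w)*(-μ+w)^k)) * hw
  -- u 0 ≠ 0
  have hc0 : u 0 ≠ 0 := by
    intro h
    apply hv0
    funext j
    have hcfj := hcf (n-1-(j:ℕ)) (by omega)
    rw [h, zero_mul] at hcfj
    rw [hu (n-1-(j:ℕ)) (j:ℕ) j.isLt (by omega) (by omega)] at hcfj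
    have : v ⟨(j:ℕ), j.isLt⟩ = 0 := by
      rcases mul_eq_zero.mp hcfj with h' | h'
      · rcases mul_eq_zero.mp h' with h'' | h''
        · norm_num at h''
        · exact absurd h'' hw0
      · exact h'
    simpa using this
  -- the key equation
  have h2cf := hcf (n-2) (by omega)
  have h1cf := hcf (n-1) (by omega)
  have hzn1 : (-μ-w)^(n-1) = (-μ-w)^(n-2) * (-μ-w) := by
    rw [← pow_succ]; congr 1; omega
  have hz'n1 : (-μ+w)^(n-1) = (-μ+w)^(n-2) * (-μ+w) := by
    rw [← pow_succ]; congr 1; omega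
  rw [hzn1, hz'n1] at h1cf
  have hcomb : u 0 * ((1-w)*(-μ-w)^n - (1+w)*(-μ+w)^n) = 0 := by
    have hzn : (-μ-w)^n = (-μ-w)^(n-2) * (-μ-w)^2 := by
      rw [← pow_add]; congr 1; omega
    have hz'n : (-μ+w)^n = (-μ+w)^(n-2) * (-μ+w)^2 := by
      rw [← pow_add]; congr 1; omega
    rw [hzn, hz'n]
    linear_combination h2cf - 2*μ*h1cf - 2*w*hu0eq +
      (u 0 * ((1-w)*(-μ-w)^(n-2) - (1+w)*(-μ+w)^(n-2))) * hw
  have hEq : (1-w)*(-μ-w)^n = (1+w)*(-μ+w)^n := by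
    have := (mul_eq_zero.mp hcomb).resolve_left hc0
    linear_combination this
  rcases le_total (‖-μ+w‖) (‖-μ-w‖) with hord | hord
  · exact aux_final n hn μ w hw hge hord hEq
  · refine aux_final n hn μ (-w) (by linear_combination hw) hge ?_ ?_
    · rw [show -μ + -w = -μ - w from by ring, show -μ - -w = -μ + w from by ring]
      exact hord
    · rw [show -μ - -w = -μ + w from by ring, show -μ + -w = -μ - w from by ring,
        show (1 : ℂ) - -w = 1 + w from by ring, show (1 : ℂ) + -w = 1 - w from by ring]
      exact hEq.symm
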